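/- With ν, g_{G^-} as in the cavity example (ω₀ = 0 case), the output pulse shape ξ_out preserves normalization: ∫_{-∞}^∞ |ξ_out(t)|² dt = ∫_{-∞}^∞ |ν(t)|² dt = 1. -/

import Mathlib

open MeasureTheory Complex

lemma my_integral_exp_neg_mul {a : ℝ} (ha : 0 < a) :
    ∫ x in Set.Ioi (0:ℝ), Real.exp (-(a * x)) = 1 / a := by
  have h := integral_comp_mul_left_Ioi (fun x => Real.exp (-x)) 0 ha
  simp only [mul_zero, smul_eq_mul] at h
  rw [h, integral_exp_neg_Ioi_zero, mul_one, one_div]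

lemma my_key (a b C1 C2 : ℝ) (ha : 0 < a) (hb : 0 < b) :
    ∫ x in Set.Ioi (0:ℝ), (C1 * Real.exp (-(a * x)) + C2 * Real.exp (-(b * x)))^2
      = C1^2 / (2*a) + 2*C1*C2 / (a+b) + C2^2 / (2*b) := by
  have hpt : ∀ x : ℝ, (C1 * Real.exp (-(a * x)) + C2 * Real.exp (-(b * x)))^2
      = C1^2 * Real.exp (-(2*a*x)) + (2*C1*C2) * Real.exp (-((a+b)*x))
        + C2^2 * Real.exp (-(2*b*x)) := by
    intro x
    rw [show -(2*a*x) = -(a*x) + -(a*x) by ring, show -((a+b)*x) = -(a*x) + -(b*x) by ring,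
      show -(2*b*x) = -(b*x) + -(b*x) by ring, Real.exp_add, Real.exp_add, Real.exp_add]
    ring
  have hint : ∀ c : ℝ, 0 < c → ∀ C : ℝ,
      IntegrableOn (fun x => C * Real.exp (-(c*x))) (Set.Ioi (0:ℝ)) := by
    intro c hc C
    have := (exp_neg_integrableOn_Ioi 0 hc).const_mul C
    simpa [neg_mul, IntegrableOn] using this
  calc ∫ x in Set.Ioi (0:ℝ), (C1 * Real.exp (-(a * x)) + C2 * Real.exp (-(b * x)))^2
      = ∫ x in Set.Ioi (0:ℝ), (C1^2 * Real.exp (-(2*a*x)) + (2*C1*C2) * Real.exp (-((a+b)*x))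
        + C2^2 * Real.exp (-(2*b*x))) := by
        apply integral_congr_ae; filter_upwards with x; exact hpt x
    _ = (∫ x in Set.Ioi (0:ℝ), C1^2 * Real.exp (-(2*a*x)))
        + (∫ x in Set.Ioi (0:ℝ), (2*C1*C2) * Real.exp (-((a+b)*x)))
        + (∫ x in Set.Ioi (0:ℝ), C2^2 * Real.exp (-(2*b*x))) := by
        have h1 := hint (2*a) (by linarith) (C1^2)
        have h2 := hint (a+b) (by linarith) (2*C1*C2)
        have h3 := hint (2*b) (by linarith) (C2^2)
        have h12 : IntegrableOn (fun x => C1^2 * Real.exp (-(2*a*x))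
            + 2*C1*C2 * Real.exp (-((a+b)*x))) (Set.Ioi (0:ℝ)) := h1.add h2
        rw [integral_add h12 h3, integral_add h1 h2]
    _ = C1^2 / (2*a) + 2*C1*C2 / (a+b) + C2^2 / (2*b) := by
        rw [integral_const_mul, integral_const_mul, integral_const_mul]
        rw [show (fun x => Real.exp (-(2*a*x))) = fun x => Real.exp (-((2*a)*x)) by
              funext x; ring_nf,
            show (fun x => Real.exp (-(2*b*x))) = fun x => Real.exp (-((2*b)*x)) by
              funext x; ring_nf]
        rw [my_integral_exp_neg_mul (by linarith : (0:ℝ) < 2*a),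
          my_integral_exp_neg_mul (by linarith : (0:ℝ) < a + b),
          my_integral_exp_neg_mul (by linarith : (0:ℝ) < 2*b)]
        ring

lemma my_alg (γ κ s : ℝ) (hγ : 0 < γ) (hκ : 0 < κ) (hd : κ/2-γ ≠ 0) (hs2 : s^2 = 2*γ) :
    (s - κ*s/(κ/2-γ))^2/(2*γ) + 2*(s - κ*s/(κ/2-γ))*(κ*s/(κ/2-γ))/(γ+κ/2)
      + (κ*s/(κ/2-γ))^2/(2*(κ/2)) = 1 := by
  have hγκ : γ+κ/2 ≠ 0 := by positivity
  have h1 : κ - 2*γ ≠ 0 := by intro h; apply hd; linarith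
  have key : (s - κ*s/(κ/2-γ))^2/(2*γ) + 2*(s - κ*s/(κ/2-γ))*(κ*s/(κ/2-γ))/(γ+κ/2)
        + (κ*s/(κ/2-γ))^2/(2*(κ/2))
      = s^2 * ((1 - κ/(κ/2-γ))^2/(2*γ) + 2*(1-κ/(κ/2-γ))*(κ/(κ/2-γ))/(γ+κ/2)
        + (κ/(κ/2-γ))^2/(2*(κ/2))) := by
    ring
  rw [key, hs2]
  field_simp
  ring

/-- The optical cavity (an all-pass system) preserves the normalization of the single-photon
pulse shape: ∫|ξ_out|² = ∫|ν|² = 1. -/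
theorem cavity_preserves_normalization (γ κ : ℝ) (hγ : 0 < γ) (hκ : 0 < κ)
    (hne : γ ≠ κ / 2)
    (ν ξout : ℝ → ℂ)
    (hν : ∀ t : ℝ, ν t = if t < 0 then 0 else (Real.sqrt (2 * γ) : ℂ) * Complex.exp (-(γ : ℂ) * t))
    (hξ : ∀ t : ℝ, ξout t = if t < 0 then 0 else
      (Real.sqrt (2 * γ) : ℂ) * Complex.exp (-(γ : ℂ) * t)
      - ((κ : ℂ) * (Real.sqrt (2 * γ) : ℂ) / ((κ / 2 : ℂ) - γ)) *
        (Complex.exp (-(γ : ℂ) * t) - Complex.exp (-((κ / 2 : ℂ)) * t))) :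
    ((∫ t : ℝ, ‖ξout t‖ ^ 2) = ∫ t : ℝ, ‖ν t‖ ^ 2) ∧ (∫ t : ℝ, ‖ν t‖ ^ 2) = 1 := by
  set s : ℝ := Real.sqrt (2 * γ) with hs
  have hs2 : s ^ 2 = 2 * γ := Real.sq_sqrt (by linarith)
  have hd : κ / 2 - γ ≠ 0 := fun h => hne (by linarith)
  set Cr : ℝ := κ * s / (κ / 2 - γ) with hCr
  -- ν integral
  have hνind : (fun t : ℝ => ‖ν t‖ ^ 2)
      = Set.indicator (Set.Ici (0:ℝ))
        (fun t => (s * Real.exp (-(γ*t)) + 0 * Real.exp (-((κ/2)*t)))^2) := by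
    funext t
    by_cases ht : t < 0
    · rw [hν t, if_pos ht, Set.indicator_of_notMem (by simpa using ht)]
      simp
    · rw [hν t, if_neg ht, Set.indicator_of_mem (by simpa using not_lt.mp ht)]
      have : (s : ℂ) * Complex.exp (-(γ : ℂ) * t)
          = ((s * Real.exp (-(γ*t)) : ℝ) : ℂ) := by
        push_cast [Complex.ofReal_exp]
        ring_nf
      rw [this, Complex.norm_real, Real.norm_eq_abs, _root_.sq_abs]
      ring
  have hνint : (∫ t : ℝ, ‖ν t‖ ^ 2) = 1 := by
    rw [hνind, integral_indicator measurableSet_Ici, integral_Ici_eq_integral_Ioi,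
      my_key γ (κ/2) s 0 hγ (by linarith)]
    field_simp
    linear_combination (κ*(2*γ+κ)) * hs2
  refine ⟨?_, hνint⟩
  -- ξout integral
  have hCc : ((κ : ℂ) * (s : ℂ) / ((κ / 2 : ℂ) - γ)) = ((Cr : ℝ) : ℂ) := by
    rw [hCr]; push_cast
    rfl
  have hξind : (fun t : ℝ => ‖ξout t‖ ^ 2)
      = Set.indicator (Set.Ici (0:ℝ))
        (fun t => ((s - Cr) * Real.exp (-(γ*t)) + Cr * Real.exp (-((κ/2)*t)))^2) := by
    funext t
    by_cases ht : t < 0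
    · rw [hξ t, if_pos ht, Set.indicator_of_notMem (by simpa using ht)]
      simp
    · rw [hξ t, if_neg ht, Set.indicator_of_mem (by simpa using not_lt.mp ht), hCc]
      have : (s : ℂ) * Complex.exp (-(γ : ℂ) * t)
          - ((Cr : ℝ) : ℂ) * (Complex.exp (-(γ : ℂ) * t) - Complex.exp (-((κ / 2 : ℂ)) * t))
          = (((s - Cr) * Real.exp (-(γ*t)) + Cr * Real.exp (-((κ/2)*t)) : ℝ) : ℂ) := by
        push_cast [Complex.ofReal_exp]
        ring_nf
      rw [this, Complex.norm_real, Real.norm_eq_abs, _root_.sq_abs]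
  rw [hξind, hνint, integral_indicator measurableSet_Ici, integral_Ici_eq_integral_Ioi,
    my_key γ (κ/2) (s - Cr) Cr hγ (by linarith)]
  rw [hCr]
  exact my_alg γ κ s hγ hκ hd hs2
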